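/- Assume c_j > 0 for all j. Then f has at most one local maximum point on P in the open main orthant: if x₀ and x₁ are both local maxima of f on P and all coordinates of x₀ and of x₁ are strictly positive, then x₀ = x₁. -/

import Mathlib

open scoped BigOperators


lemma my_aux (n : ℕ) (φ : ℝ → ℝ)
    (hconc : StrictConcaveOn ℝ (Set.Ici (0:ℝ)) φ)
    (c l : Fin n → ℝ) (hc : ∀ j, 0 < c j) (b : ℝ)
    (f : EuclideanSpace ℝ (Fin n) → ℝ)
    (hf : ∀ x : EuclideanSpace ℝ (Fin n), f x = ∑ i, c i * φ (x i))
    (P : Set (EuclideanSpace ℝ (Fin n)))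
    (hP : P = {x : EuclideanSpace ℝ (Fin n) | ∑ j, l j * x j = b})
    (x₀ x₁ : EuclideanSpace ℝ (Fin n)) (hx₀P : x₀ ∈ P) (hx₁P : x₁ ∈ P)
    (hpos₀ : ∀ j, 0 < x₀ j) (hpos₁ : ∀ j, 0 < x₁ j)
    (hne : x₀ ≠ x₁) (hle : f x₀ ≤ f x₁)
    (hmax₀ : ∃ ε > 0, ∀ x ∈ P, ‖x - x₀‖ < ε → f x ≤ f x₀) : False := by
  obtain ⟨ε, hε, hεmax⟩ := hmax₀
  have hd : (0:ℝ) < ‖x₁ - x₀‖ := by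
    rw [norm_pos_iff, sub_ne_zero]; exact hne.symm
  set d := ‖x₁ - x₀‖ with hdd
  set t := min (1/2) (ε / (2 * d)) with ht
  have ht0 : 0 < t := lt_min (by norm_num) (by positivity)
  have ht1 : t < 1 := lt_of_le_of_lt (min_le_left _ _) (by norm_num)
  set y : EuclideanSpace ℝ (Fin n) := x₀ + t • (x₁ - x₀) with hy
  have hyi : ∀ i, y i = (1 - t) * x₀ i + t * x₁ i := by
    intro i
    simp [hy, PiLp.add_apply, PiLp.smul_apply, PiLp.sub_apply, smul_eq_mul]
    ring
  have hyP : y ∈ P := by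
    rw [hP, Set.mem_setOf_eq]
    have h0 : ∑ j, l j * x₀ j = b := by rw [hP] at hx₀P; exact hx₀P
    have h1 : ∑ j, l j * x₁ j = b := by rw [hP] at hx₁P; exact hx₁P
    have : ∑ j, l j * y j = (1 - t) * ∑ j, l j * x₀ j + t * ∑ j, l j * x₁ j := by
      rw [Finset.mul_sum, Finset.mul_sum, ← Finset.sum_add_distrib]
      refine Finset.sum_congr rfl fun j _ => ?_
      rw [hyi j]; ring
    rw [this, h0, h1]; ring
  have hnorm : ‖y - x₀‖ < ε := by
    have : y - x₀ = t • (x₁ - x₀) := by rw [hy]; abel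
    rw [this, norm_smul, Real.norm_eq_abs, abs_of_pos ht0, ← hdd]
    have : t ≤ ε / (2 * d) := min_le_right _ _
    calc t * d ≤ (ε / (2 * d)) * d := by nlinarith
      _ = ε / 2 := by field_simp
      _ < ε := by linarith
  have hlt : f x₀ < f y := by
    obtain ⟨i₀, hi₀⟩ : ∃ i, x₀ i ≠ x₁ i := by
      by_contra h; push_neg at h; exact hne (PiLp.ext h)
    have hterm : ∀ i ∈ Finset.univ,
        (1 - t) * (c i * φ (x₀ i)) + t * (c i * φ (x₁ i)) ≤ c i * φ (y i) := by
      intro i _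
      have := hconc.concaveOn.2 (Set.mem_Ici.2 (hpos₀ i).le) (Set.mem_Ici.2 (hpos₁ i).le)
        (by linarith : (0:ℝ) ≤ 1 - t) ht0.le (by ring)
      simp only [smul_eq_mul] at this
      rw [hyi i]
      nlinarith [(hc i), this]
    have hstrict : (1 - t) * (c i₀ * φ (x₀ i₀)) + t * (c i₀ * φ (x₁ i₀)) < c i₀ * φ (y i₀) := by
      have := hconc.2 (Set.mem_Ici.2 (hpos₀ i₀).le) (Set.mem_Ici.2 (hpos₁ i₀).le) hi₀
        (by linarith : (0:ℝ) < 1 - t) ht0 (by ring)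
      simp only [smul_eq_mul] at this
      rw [hyi i₀]
      nlinarith [(hc i₀), this]
    have hsum : ∑ i, ((1 - t) * (c i * φ (x₀ i)) + t * (c i * φ (x₁ i))) < ∑ i, c i * φ (y i) :=
      Finset.sum_lt_sum hterm ⟨i₀, Finset.mem_univ i₀, hstrict⟩
    have heq : ∑ i, ((1 - t) * (c i * φ (x₀ i)) + t * (c i * φ (x₁ i)))
        = (1 - t) * f x₀ + t * f x₁ := by
      rw [hf, hf, Finset.mul_sum, Finset.mul_sum, ← Finset.sum_add_distrib]
    rw [hf y]
    calc f x₀ = (1 - t) * f x₀ + t * f x₀ := by ring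
      _ ≤ (1 - t) * f x₀ + t * f x₁ := by nlinarith
      _ = ∑ i, ((1 - t) * (c i * φ (x₀ i)) + t * (c i * φ (x₁ i))) := heq.symm
      _ < _ := hsum
  exact absurd (hεmax y hyP hnorm) (not_le.2 hlt)

lemma my_strictConcave (φ : ℝ → ℝ) (hφC : ContDiff ℝ 2 φ)
    (hφ'' : ∀ x : ℝ, x ≠ 0 → x * deriv (deriv φ) x < 0) :
    StrictConcaveOn ℝ (Set.Ici (0:ℝ)) φ := by
  apply strictConcaveOn_of_deriv2_neg (convex_Ici 0) hφC.continuous.continuousOn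
  intro x hx
  rw [interior_Ici] at hx
  have hx0 : (0:ℝ) < x := hx
  have := hφ'' x hx0.ne'
  have h2 : deriv^[2] φ x = deriv (deriv φ) x := by
    simp [Function.iterate_succ, Function.iterate_zero]
  rw [h2]
  nlinarith

/-- Under assumption (A1) on `φ`, with `cⱼ > 0` for all `j`, the function
`f(x) = ∑ cᵢ φ(xᵢ)` has at most one local maximum point on the hyperplane `P` in the
open main orthant: two such local maxima with all coordinates strictly positive coincide. -/
theorem stmt_3 (n : ℕ) (φ : ℝ → ℝ)
    (hφC : ContDiff ℝ 2 φ)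
    (hodd : ∀ x : ℝ, φ (-x) = -φ x)
    (hφ' : ∀ x : ℝ, 0 < deriv φ x)
    (hφ'' : ∀ x : ℝ, x ≠ 0 → x * deriv (deriv φ) x < 0)
    (hlim : ∃ L : ℝ, Filter.Tendsto φ Filter.atTop (nhds L))
    (c l : Fin n → ℝ) (hc : ∀ j, 0 < c j) (hl : l ≠ 0) (b : ℝ)
    (f : EuclideanSpace ℝ (Fin n) → ℝ)
    (hf : ∀ x : EuclideanSpace ℝ (Fin n), f x = ∑ i, c i * φ (x i))
    (P : Set (EuclideanSpace ℝ (Fin n)))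
    (hP : P = {x : EuclideanSpace ℝ (Fin n) | ∑ j, l j * x j = b})
    (x₀ x₁ : EuclideanSpace ℝ (Fin n)) (hx₀P : x₀ ∈ P) (hx₁P : x₁ ∈ P)
    (hpos₀ : ∀ j, 0 < x₀ j) (hpos₁ : ∀ j, 0 < x₁ j)
    (hmax₀ : ∃ ε > 0, ∀ x ∈ P, ‖x - x₀‖ < ε → f x ≤ f x₀)
    (hmax₁ : ∃ ε > 0, ∀ x ∈ P, ‖x - x₁‖ < ε → f x ≤ f x₁) :
    x₀ = x₁ := by
  by_contra hne
  have hconc := my_strictConcave φ hφC hφ''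
  rcases le_total (f x₀) (f x₁) with h | h
  · exact my_aux n φ hconc c l hc b f hf P hP x₀ x₁ hx₀P hx₁P hpos₀ hpos₁ hne h hmax₀
  · exact my_aux n φ hconc c l hc b f hf P hP x₁ x₀ hx₁P hx₀P hpos₁ hpos₀ (Ne.symm hne) h hmax₁
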